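/- Let Q: E → S_n be a measurable positive semi-definite self-adjoint matrix function with measurable eigenvalue functions λ_1,...,λ_n and measurable orthonormal eigenvector functions v_1,...,v_n. For a measurable vector field f: E → R^n with components f̃_j = f^T v_j, the norm equivalence (1/n)·Σ_{j=1}^n ‖f̃_j λ_j^{1/2}‖_{L^{p(·)}(E)} ≤ ‖|√Q f|‖_{L^{p(·)}(E)} ≤ Σ_{j=1}^n ‖f̃_j λ_j^{1/2}‖_{L^{p(·)}(E)} holds. -/

import Mathlib

open MeasureTheory ENNReal Matrix
open scoped NNReal

/-- The variable Lebesgue norm `‖f‖_{L^{p(·)}(E)}`. -/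
noncomputable def vNorm {d : ℕ} (E : Set (EuclideanSpace ℝ (Fin d)))
    (p f : EuclideanSpace ℝ (Fin d) → ℝ) : ℝ≥0∞ :=
  sInf {t : ℝ≥0∞ | 0 < t ∧ ∫⁻ x in E, ((‖f x‖₊ : ℝ≥0∞) / t) ^ (p x) ≤ 1}

/-- For a measurable positive semi-definite matrix function `Q` with measurable
eigenvalues `λⱼ` and measurable orthonormal eigenvectors `vⱼ`, and a measurable
vector field `f` with components `f̃ⱼ = fᵀvⱼ`, the norm equivalence
`(1/n) Σⱼ ‖f̃ⱼ λⱼ^{1/2}‖_{L^{p(·)}(E)} ≤ ‖ |√Q f| ‖_{L^{p(·)}(E)}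
  ≤ Σⱼ ‖f̃ⱼ λⱼ^{1/2}‖_{L^{p(·)}(E)}` holds, where `|√Q f| = (fᵀQf)^{1/2}`. -/
private lemma vNorm_def {d : ℕ} (E : Set (EuclideanSpace ℝ (Fin d)))
    (p f : EuclideanSpace ℝ (Fin d) → ℝ) :
    vNorm E p f = sInf {t : ℝ≥0∞ | 0 < t ∧ ∫⁻ x in E, ((‖f x‖₊ : ℝ≥0∞) / t) ^ (p x) ≤ 1} := rfl


private lemma real_jensen {n : ℕ} (A : Fin n → ℝ) (hA : ∀ j, 0 ≤ A j) (s : Fin n → ℝ)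
    (hs : ∀ j, 0 < s j) (hS : 0 < ∑ j, s j) (q : ℝ) (hq : 1 ≤ q) :
    ((∑ j, A j) / (∑ j, s j)) ^ q ≤ ∑ j, (s j / ∑ j, s j) * (A j / s j) ^ q := by
  set S := ∑ j, s j with hSdef
  have h := (convexOn_rpow hq).map_sum_le (t := Finset.univ)
    (w := fun j => s j / S) (p := fun j => A j / s j)
    (fun j _ => div_nonneg (hs j).le hS.le)
    (by rw [← Finset.sum_div, div_self hS.ne'])
    (fun j _ => Set.mem_Ici.2 (div_nonneg (hA j) (hs j).le))
  have e : ∑ j, (s j / S) • (A j / s j) = (∑ j, A j) / S := by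
    rw [Finset.sum_div]
    refine Finset.sum_congr rfl fun j _ => ?_
    have := (hs j).ne'
    field_simp
    rw [smul_eq_mul, ← mul_assoc, mul_div_cancel₀ (s j) hS.ne', mul_div_cancel₀ (A j) (hs j).ne']
  rw [e] at h
  simpa [smul_eq_mul] using h

private lemma ennreal_jensen {n : ℕ} (a : Fin n → ℝ≥0) (t : Fin n → ℝ≥0∞)
    (ht0 : ∀ j, t j ≠ 0) (htf : ∀ j, t j ≠ ∞) (hT0 : (∑ j, t j) ≠ 0)
    (q : ℝ) (hq : 1 ≤ q) :
    ((∑ j, (a j : ℝ≥0∞)) / ∑ j, t j) ^ q ≤ ∑ j, (t j / ∑ j, t j) * ((a j : ℝ≥0∞) / t j) ^ q := by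
  have hq0 : 0 ≤ q := zero_le_one.trans hq
  have hTf : (∑ j, t j) ≠ ∞ := by simp [ENNReal.sum_eq_top, htf]
  have haf : (∑ j, (a j : ℝ≥0∞)) ≠ ∞ := by simp [ENNReal.sum_eq_top]
  have hL : ((∑ j, (a j : ℝ≥0∞)) / ∑ j, t j) ^ q ≠ ∞ :=
    ENNReal.rpow_ne_top_of_nonneg hq0 (ENNReal.div_lt_top haf hT0).ne
  have hterm : ∀ j, (t j / ∑ j, t j) * ((a j : ℝ≥0∞) / t j) ^ q ≠ ∞ := fun j =>
    ENNReal.mul_ne_top (ENNReal.div_lt_top (htf j) hT0).ne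
      (ENNReal.rpow_ne_top_of_nonneg hq0 (ENNReal.div_lt_top ENNReal.coe_ne_top (ht0 j)).ne)
  have hR : (∑ j, (t j / ∑ j, t j) * ((a j : ℝ≥0∞) / t j) ^ q) ≠ ∞ := by
    simp [ENNReal.sum_eq_top]
    intro j
    exact hterm j
  rw [← ENNReal.toReal_le_toReal hL hR]
  rw [ENNReal.toReal_sum (fun j _ => hterm j), ← ENNReal.toReal_rpow, ENNReal.toReal_div,
    ENNReal.toReal_sum (fun j _ => ENNReal.coe_ne_top),
    ENNReal.toReal_sum (fun j _ => htf j)]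
  have key := real_jensen (fun j => (a j : ℝ)) (fun j => (a j).coe_nonneg)
    (fun j => (t j).toReal)
    (fun j => ENNReal.toReal_pos (ht0 j) (htf j))
    (by
      have : (∑ j, t j).toReal = ∑ j, (t j).toReal := ENNReal.toReal_sum (fun j _ => htf j)
      rw [← this]
      exact ENNReal.toReal_pos hT0 hTf) q hq
  refine le_trans key (le_of_eq ?_)
  refine Finset.sum_congr rfl fun j _ => ?_
  rw [ENNReal.toReal_mul, ENNReal.toReal_div, ← ENNReal.toReal_rpow, ENNReal.toReal_div,
    ENNReal.toReal_sum (fun j _ => htf j), ENNReal.coe_toReal]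

private lemma vnorm_mono {d : ℕ} (E : Set (EuclideanSpace ℝ (Fin d)))
    (p : EuclideanSpace ℝ (Fin d) → ℝ) (hp0 : ∀ x, 0 ≤ p x)
    {f g : EuclideanSpace ℝ (Fin d) → ℝ} (h : ∀ x, |f x| ≤ |g x|) :
    vNorm E p f ≤ vNorm E p g := by
  apply sInf_le_sInf
  rintro t ⟨ht0, ht1⟩
  refine ⟨ht0, le_trans (lintegral_mono fun x => ?_) ht1⟩
  refine ENNReal.rpow_le_rpow (ENNReal.div_le_div_right ?_ t) (hp0 x)
  exact_mod_cast (by simpa [Real.norm_eq_abs] using h x : ‖f x‖ ≤ ‖g x‖)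

private lemma vnorm_sum_le {d n : ℕ} (E : Set (EuclideanSpace ℝ (Fin d)))
    (p : EuclideanSpace ℝ (Fin d) → ℝ) (hp : Measurable p) (hp1 : ∀ x, 1 ≤ p x)
    (h : Fin n → EuclideanSpace ℝ (Fin d) → ℝ) (hh : ∀ j, Measurable (h j)) :
    vNorm E p (fun x => ∑ j, |h j x|) ≤ ∑ j, vNorm E p (h j) := by
  apply ENNReal.le_of_forall_pos_le_add
  intro ε hε hfin
  rcases Nat.eq_zero_or_pos n with hn | hn
  · subst hn
    refine le_trans (sInf_le ?_) (le_add_left le_rfl)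
    refine ⟨ENNReal.coe_pos.2 hε, ?_⟩
    have h0 : ∫⁻ x in E, ((‖∑ j : Fin 0, |h j x|‖₊ : ℝ≥0∞) / (ε : ℝ≥0∞)) ^ (p x) = 0 := by
      rw [show (fun x => ((‖∑ j : Fin 0, |h j x|‖₊ : ℝ≥0∞) / (ε : ℝ≥0∞)) ^ (p x))
          = fun _ => (0 : ℝ≥0∞) from funext fun x => by
            simp [ENNReal.zero_rpow_of_pos (lt_of_lt_of_le one_pos (hp1 x))]]
      simp
    rw [h0]
    exact zero_le_one
  haveI : Nonempty (Fin n) := Fin.pos_iff_nonempty.mp hn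
  have hjfin : ∀ j, vNorm E p (h j) ≠ ∞ := fun j =>
    (lt_of_le_of_lt (Finset.single_le_sum (fun _ _ => zero_le) (Finset.mem_univ j)) hfin).ne
  set δ : ℝ≥0∞ := (ε : ℝ≥0∞) / n with hδdef
  have hδ0 : δ ≠ 0 := by
    simp [hδdef, ENNReal.div_eq_zero_iff, hε.ne']
  have hex : ∀ j, ∃ s ∈ {s : ℝ≥0∞ | 0 < s ∧
      ∫⁻ x in E, ((‖h j x‖₊ : ℝ≥0∞) / s) ^ (p x) ≤ 1}, s < vNorm E p (h j) + δ := by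
    intro j
    have : sInf {s : ℝ≥0∞ | 0 < s ∧
        ∫⁻ x in E, ((‖h j x‖₊ : ℝ≥0∞) / s) ^ (p x) ≤ 1} < vNorm E p (h j) + δ := by
      rw [← vNorm_def]
      exact ENNReal.lt_add_right (hjfin j) hδ0
    exact sInf_lt_iff.mp this
  choose t ht htlt using hex
  have ht0 : ∀ j, t j ≠ 0 := fun j => (ht j).1.ne'
  have htf : ∀ j, t j ≠ ∞ := fun j => ne_top_of_lt (htlt j)
  set T : ℝ≥0∞ := ∑ j, t j with hTdef
  have hT0 : T ≠ 0 := by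
    rw [hTdef, Ne, Finset.sum_eq_zero_iff]
    push_neg
    exact ⟨Classical.arbitrary _, Finset.mem_univ _, (ht _).1.ne'⟩
  have hTf : T ≠ ∞ := by simp [hTdef, ENNReal.sum_eq_top, htf]
  have hnn : ∀ x : EuclideanSpace ℝ (Fin d),
      (‖∑ j, |h j x|‖₊ : ℝ≥0∞) = ∑ j, (‖h j x‖₊ : ℝ≥0∞) := by
    intro x
    rw [← ENNReal.coe_finset_sum, ENNReal.coe_inj, ← NNReal.coe_inj]
    push_cast [coe_nnnorm]
    rw [Real.norm_eq_abs, abs_of_nonneg (Finset.sum_nonneg fun j _ => abs_nonneg _)]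
    exact Finset.sum_congr rfl fun j _ => (Real.norm_eq_abs _).symm
  have hFm : ∀ j, Measurable fun x => ((‖h j x‖₊ : ℝ≥0∞) / t j) ^ (p x) := by
    intro j
    have : Measurable fun x => (‖h j x‖₊ : ℝ≥0∞) / t j := by
      simp only [div_eq_mul_inv]
      exact ((hh j).nnnorm.coe_nnreal_ennreal).mul_const _
    exact this.pow hp
  have hint : ∫⁻ x in E, ((‖∑ j, |h j x|‖₊ : ℝ≥0∞) / T) ^ (p x) ≤ 1 := by
    calc ∫⁻ x in E, ((‖∑ j, |h j x|‖₊ : ℝ≥0∞) / T) ^ (p x)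
        ≤ ∫⁻ x in E, ∑ j, (t j / T) * (((‖h j x‖₊ : ℝ≥0∞)) / t j) ^ (p x) := by
          refine lintegral_mono fun x => ?_
          rw [hnn x]
          exact ennreal_jensen (fun j => ‖h j x‖₊) t ht0 htf hT0 (p x) (hp1 x)
      _ = ∑ j, ∫⁻ x in E, (t j / T) * (((‖h j x‖₊ : ℝ≥0∞)) / t j) ^ (p x) :=
          lintegral_finset_sum _ (fun j _ => (hFm j).const_mul _)
      _ = ∑ j, (t j / T) * ∫⁻ x in E, (((‖h j x‖₊ : ℝ≥0∞)) / t j) ^ (p x) :=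
          Finset.sum_congr rfl fun j _ => lintegral_const_mul _ (hFm j)
      _ ≤ ∑ j, (t j / T) * 1 :=
          Finset.sum_le_sum fun j _ => mul_le_mul_right (ht j).2 _
      _ = 1 := by
          simp only [mul_one, ENNReal.div_eq_inv_mul, ← Finset.mul_sum]
          rw [← hTdef, ← ENNReal.div_eq_inv_mul, ENNReal.div_self hT0 hTf]
  have hmem : vNorm E p (fun x => ∑ j, |h j x|) ≤ T := by
    rw [vNorm_def]
    exact sInf_le ⟨pos_iff_ne_zero.mpr hT0, hint⟩
  refine hmem.trans ?_
  calc T ≤ ∑ j, (vNorm E p (h j) + δ) := Finset.sum_le_sum fun j _ => (htlt j).le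
    _ = (∑ j, vNorm E p (h j)) + n * δ := by
        rw [Finset.sum_add_distrib, Finset.sum_const, Finset.card_univ, Fintype.card_fin,
          nsmul_eq_mul]
    _ = (∑ j, vNorm E p (h j)) + ε := by
        rw [hδdef, ENNReal.mul_div_cancel (by exact_mod_cast hn.ne') (natCast_ne_top n)]

theorem stmt14 {d n : ℕ} (E : Set (EuclideanSpace ℝ (Fin d))) (hE : MeasurableSet E)
    (p : EuclideanSpace ℝ (Fin d) → ℝ) (hp : Measurable p)
    (hp1 : ∀ x, 1 ≤ p x)
    (Q : EuclideanSpace ℝ (Fin d) → Matrix (Fin n) (Fin n) ℝ)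
    (hQmeas : ∀ i j, Measurable (fun x => Q x i j)) (hQ : ∀ x, (Q x).PosSemidef)
    (lam : Fin n → EuclideanSpace ℝ (Fin d) → ℝ)
    (v : Fin n → EuclideanSpace ℝ (Fin d) → (Fin n → ℝ))
    (hlam : ∀ j, Measurable (lam j)) (hv : ∀ j, Measurable (v j))
    (hlamnn : ∀ j x, 0 ≤ lam j x)
    (hortho : ∀ x i j, v i x ⬝ᵥ v j x = if i = j then (1 : ℝ) else 0)
    (heig : ∀ j x, (Q x).mulVec (v j x) = lam j x • v j x)
    (f : EuclideanSpace ℝ (Fin d) → (Fin n → ℝ)) (hf : Measurable f) :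
    (n : ℝ≥0∞)⁻¹ *
        ∑ j, vNorm E p (fun x => (f x ⬝ᵥ v j x) * Real.sqrt (lam j x)) ≤
      vNorm E p (fun x => Real.sqrt (f x ⬝ᵥ (Q x).mulVec (f x))) ∧
    vNorm E p (fun x => Real.sqrt (f x ⬝ᵥ (Q x).mulVec (f x))) ≤
      ∑ j, vNorm E p (fun x => (f x ⬝ᵥ v j x) * Real.sqrt (lam j x)) := by
  have hp0 : ∀ x, 0 ≤ p x := fun x => zero_le_one.trans (hp1 x)
  set h : Fin n → EuclideanSpace ℝ (Fin d) → ℝ :=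
    fun j x => (f x ⬝ᵥ v j x) * Real.sqrt (lam j x) with hhdef
  set g : EuclideanSpace ℝ (Fin d) → ℝ :=
    fun x => Real.sqrt (f x ⬝ᵥ (Q x).mulVec (f x)) with hgdef
  -- completeness relation for the orthonormal eigenvectors
  have hVV : ∀ x (a b : Fin n),
      (∑ j, v j x a * v j x b) = if a = b then (1 : ℝ) else 0 := by
    intro x a b
    set M : Matrix (Fin n) (Fin n) ℝ := Matrix.of fun j k => v j x k with hM
    have h1 : M * Mᵀ = 1 := by
      ext i j
      rw [Matrix.mul_apply]
      simpa [hM, Matrix.transpose_apply, Matrix.one_apply, dotProduct]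
        using hortho x i j
    have h2 : Mᵀ * M = 1 := mul_eq_one_comm.mp h1
    have h3 := congrFun (congrFun h2 a) b
    rw [Matrix.mul_apply] at h3
    simpa [hM, Matrix.transpose_apply, Matrix.one_apply] using h3
  -- spectral expansion of the quadratic form
  have key : ∀ x, f x ⬝ᵥ (Q x).mulVec (f x) = ∑ j, lam j x * (f x ⬝ᵥ v j x) ^ 2 := by
    intro x
    have hdec : f x = ∑ j, (f x ⬝ᵥ v j x) • v j x := by
      funext k
      have e1 : (∑ j, (f x ⬝ᵥ v j x) • v j x) k
          = ∑ j, ∑ m, f x m * (v j x m * v j x k) := by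
        simp [dotProduct, Finset.sum_apply, Finset.sum_mul, mul_assoc]
      rw [e1, Finset.sum_comm]
      have e2 : ∀ m, ∑ j, f x m * (v j x m * v j x k)
          = f x m * (if m = k then (1:ℝ) else 0) := by
        intro m
        rw [← Finset.mul_sum, hVV x m k]
      simp only [e2]
      simp [Finset.sum_ite_eq']
    have h1 : (Q x).mulVec (f x) = ∑ j, ((f x ⬝ᵥ v j x) * lam j x) • v j x := by
      conv_lhs => rw [hdec]
      rw [show (Q x).mulVec (∑ j, (f x ⬝ᵥ v j x) • v j x)
          = ∑ j, (Q x).mulVec ((f x ⬝ᵥ v j x) • v j x) from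
        map_sum (Q x).mulVecLin _ _]
      refine Finset.sum_congr rfl fun j _ => ?_
      rw [Matrix.mulVec_smul, heig j x, smul_smul]
    rw [h1]
    have h2 : f x ⬝ᵥ (∑ j, ((f x ⬝ᵥ v j x) * lam j x) • v j x)
        = ∑ j, ((f x ⬝ᵥ v j x) * lam j x) * (f x ⬝ᵥ v j x) := by
      simp only [dotProduct, Finset.sum_apply, Pi.smul_apply, smul_eq_mul,
        Finset.mul_sum]
      rw [Finset.sum_comm]
      exact Finset.sum_congr rfl fun j _ => Finset.sum_congr rfl fun m _ => by ring
    rw [h2]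
    refine Finset.sum_congr rfl fun j _ => by ring
  -- pointwise bounds
  have hle : ∀ j x, |h j x| ≤ g x := by
    intro j x
    show |h j x| ≤ Real.sqrt (f x ⬝ᵥ (Q x).mulVec (f x))
    have e : |h j x| = Real.sqrt (lam j x * (f x ⬝ᵥ v j x) ^ 2) := by
      rw [Real.sqrt_mul (hlamnn j x), hhdef, abs_mul, abs_of_nonneg (Real.sqrt_nonneg _),
        Real.sqrt_sq_eq_abs, mul_comm]
    rw [e, key x]
    exact Real.sqrt_le_sqrt (Finset.single_le_sum
      (f := fun i => lam i x * (f x ⬝ᵥ v i x) ^ 2)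
      (fun i _ => mul_nonneg (hlamnn i x) (sq_nonneg _)) (Finset.mem_univ j))
  have hge : ∀ x, g x ≤ ∑ j, |h j x| := by
    intro x
    show Real.sqrt (f x ⬝ᵥ (Q x).mulVec (f x)) ≤ ∑ j, |h j x|
    rw [key x]
    have e : ∀ j, lam j x * (f x ⬝ᵥ v j x) ^ 2 = |h j x| ^ 2 := by
      intro j
      rw [hhdef, abs_mul, mul_pow, abs_of_nonneg (Real.sqrt_nonneg _),
        Real.sq_sqrt (hlamnn j x), sq_abs]
      ring
    simp only [e]
    refine le_trans (Real.sqrt_le_sqrt (Finset.sum_sq_le_sq_sum_of_nonneg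
      fun j _ => abs_nonneg _)) ?_
    rw [Real.sqrt_sq (Finset.sum_nonneg fun j _ => abs_nonneg _)]
  constructor
  · -- lower bound
    have hmono : ∀ j, vNorm E p (h j) ≤ vNorm E p g := by
      intro j
      refine vnorm_mono E p hp0 fun x => ?_
      rw [abs_of_nonneg (by rw [hgdef]; exact Real.sqrt_nonneg _ : 0 ≤ g x)]
      exact hle j x
    have hsum : ∑ j, vNorm E p (h j) ≤ (n : ℝ≥0∞) * vNorm E p g := by
      calc ∑ j, vNorm E p (h j) ≤ ∑ _j : Fin n, vNorm E p g :=
            Finset.sum_le_sum fun j _ => hmono j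
        _ = (n : ℝ≥0∞) * vNorm E p g := by
            rw [Finset.sum_const, Finset.card_univ, Fintype.card_fin, nsmul_eq_mul]
    calc (n : ℝ≥0∞)⁻¹ * ∑ j, vNorm E p (h j)
        ≤ (n : ℝ≥0∞)⁻¹ * ((n : ℝ≥0∞) * vNorm E p g) := mul_le_mul_right hsum _
      _ = ((n : ℝ≥0∞)⁻¹ * (n : ℝ≥0∞)) * vNorm E p g := (mul_assoc _ _ _).symm
      _ ≤ 1 * vNorm E p g := by
          refine mul_le_mul_left ?_ _
          rcases Nat.eq_zero_or_pos n with hn | hn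
          · subst hn; simp
          · rw [ENNReal.inv_mul_cancel (by exact_mod_cast hn.ne') (natCast_ne_top n)]
      _ = vNorm E p g := one_mul _
  · -- upper bound
    have h1 : vNorm E p g ≤ vNorm E p (fun x => ∑ j, |h j x|) := by
      refine vnorm_mono E p hp0 fun x => ?_
      rw [abs_of_nonneg (by rw [hgdef]; exact Real.sqrt_nonneg _ : 0 ≤ g x),
        abs_of_nonneg (Finset.sum_nonneg fun j _ => abs_nonneg _)]
      exact hge x
    refine h1.trans (vnorm_sum_le E p hp hp1 h fun j => ?_)
    have hdot : Measurable fun x => f x ⬝ᵥ v j x := by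
      simp only [dotProduct]
      exact Finset.measurable_sum _ fun m _ =>
        ((measurable_pi_apply m).comp hf).mul ((measurable_pi_apply m).comp (hv j))
    exact hdot.mul (Real.continuous_sqrt.measurable.comp (hlam j))
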